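/- Let A ∈ ℝ^{n×n} be Metzler and suppose there exists v ∈ ℝⁿ with v > 0 (componentwise) such that vᵀ A < 0 componentwise. Then A is Hurwitz (every eigenvalue of A has negative real part), the origin is a globally asymptotically stable equilibrium of ẋ = Ax, and along every solution x(·) of ẋ = Ax both V(x) = Σᵢ vᵢ |xᵢ| and W(x) = Σᵢ vᵢ |(Ax)ᵢ| are nonincreasing in t and tend to 0 as t → ∞. -/

import Mathlib

open Filter Topology

noncomputable section

/-- A solution of `ẋ = f(x)` with values in `X`, defined for all `t ≥ 0`. -/
def IsSolution {n : ℕ} (f : (Fin n → ℝ) → (Fin n → ℝ)) (X : Set (Fin n → ℝ))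
    (x : ℝ → (Fin n → ℝ)) : Prop :=
  (∀ t : ℝ, 0 ≤ t → x t ∈ X) ∧ ∀ t : ℝ, 0 ≤ t → HasDerivAt x (f (x t)) t

/-- A global Lyapunov function for the equilibrium `xs` of `ẋ = f(x)` on `X`. -/
def IsGlobalLyapunov {n : ℕ} (f : (Fin n → ℝ) → (Fin n → ℝ)) (X : Set (Fin n → ℝ))
    (xs : Fin n → ℝ) (V : (Fin n → ℝ) → ℝ) : Prop :=
  ContinuousOn V X ∧
  (∀ x ∈ X, 0 ≤ V x) ∧
  (∀ x ∈ X, (V x = 0 ↔ x = xs)) ∧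
  (∀ L : ℝ, IsCompact {x ∈ X | V x ≤ L}) ∧
  ∀ x : ℝ → (Fin n → ℝ), IsSolution f X x →
    AntitoneOn (fun t => V (x t)) (Set.Ici 0) ∧
    Tendsto (fun t => V (x t)) atTop (nhds 0)

/-- Global asymptotic stability of the equilibrium `xs` of `ẋ = f(x)` on `X`. -/
def IsGAS {n : ℕ} (f : (Fin n → ℝ) → (Fin n → ℝ)) (X : Set (Fin n → ℝ))
    (xs : Fin n → ℝ) : Prop :=
  (∀ ε > (0 : ℝ), ∃ δ > (0 : ℝ), ∀ x : ℝ → (Fin n → ℝ), IsSolution f X x →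
      ‖x 0 - xs‖ < δ → ∀ t ≥ (0 : ℝ), ‖x t - xs‖ < ε) ∧
  ∀ x : ℝ → (Fin n → ℝ), IsSolution f X x → Tendsto x atTop (nhds xs)


def Metzler {n : ℕ} (A : Matrix (Fin n) (Fin n) ℝ) : Prop :=
  ∀ i j, i ≠ j → 0 ≤ A i j


/-- `A` is Hurwitz: every (complex) eigenvalue has negative real part. -/
def Hurwitz {n : ℕ} (A : Matrix (Fin n) (Fin n) ℝ) : Prop :=
  ∀ z : ℂ, Module.End.HasEigenvalue
    (Matrix.toLin' (A.map (algebraMap ℝ ℂ))) z → z.re < 0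

namespace LinSumSep

open NormedSpace Matrix
open scoped Nat

attribute [local instance] Matrix.linftyOpNormedAddCommGroup Matrix.linftyOpNormedRing
  Matrix.linftyOpNormedAlgebra

variable {n : ℕ}

/-- entry evaluation as a linear map -/
def entryL (i j : Fin n) : Matrix (Fin n) (Fin n) ℝ →ₗ[ℝ] ℝ where
  toFun M := M i j
  map_add' _ _ := rfl
  map_smul' _ _ := rfl

lemma pow_entry_nonneg {M : Matrix (Fin n) (Fin n) ℝ} (h : ∀ i j, 0 ≤ M i j) :
    ∀ (k : ℕ) (i j : Fin n), 0 ≤ (M ^ k) i j := by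
  intro k
  induction k with
  | zero => intro i j; rw [pow_zero, Matrix.one_apply]; positivity
  | succ k ih =>
      intro i j
      rw [pow_succ, Matrix.mul_apply]
      exact Finset.sum_nonneg fun l _ => mul_nonneg (ih i l) (h l j)

lemma exp_entry_nonneg {M : Matrix (Fin n) (Fin n) ℝ} (h : ∀ i j, 0 ≤ M i j) (i j : Fin n) :
    0 ≤ exp M i j := by
  have hs : Summable (fun k : ℕ => ((k ! : ℝ)⁻¹ : ℝ) • M ^ k) := expSeries_summable' (𝕂 := ℝ) M
  have key := ((entryL i j).toContinuousLinearMap).map_tsum hs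
  have h2 : (∑' k : ℕ, ((k ! : ℝ)⁻¹ : ℝ) • M ^ k) i j
      = ∑' k : ℕ, ((k ! : ℝ)⁻¹ : ℝ) * (M ^ k) i j := by
    exact key
  simp only [exp_eq_tsum ℝ]
  rw [h2]
  exact tsum_nonneg fun k => mul_nonneg (by positivity) (pow_entry_nonneg h k i j)

lemma exp_smul_entry_nonneg (A : Matrix (Fin n) (Fin n) ℝ) (hA : Metzler A)
    {t : ℝ} (ht : 0 ≤ t) (i j : Fin n) : 0 ≤ exp (t • A) i j := by
  set s : ℝ := ∑ k, |A k k| with hs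
  have hsle : ∀ k : Fin n, |A k k| ≤ s := fun k =>
    Finset.single_le_sum (f := fun k => |A k k|) (fun _ _ => abs_nonneg _) (Finset.mem_univ k)
  have hN : ∀ i j, 0 ≤ (t • (A + s • (1 : Matrix (Fin n) (Fin n) ℝ))) i j := by
    intro i j
    have hij : (t • (A + s • (1 : Matrix (Fin n) (Fin n) ℝ))) i j
        = t * (A i j + s * (if i = j then (1:ℝ) else 0)) := by
      simp [Matrix.one_apply, Matrix.smul_apply, Matrix.add_apply]
    rw [hij]
    rcases eq_or_ne i j with h | h
    · subst h; rw [if_pos rfl, mul_one]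
      have h1 := (abs_le.1 (hsle i)).1
      have h2 : 0 ≤ A i i + s := by linarith
      exact mul_nonneg ht h2
    · simp only [if_neg h, mul_zero, add_zero]
      exact mul_nonneg ht (hA i j h)
  have key : t • A = (-(t * s)) • (1 : Matrix (Fin n) (Fin n) ℝ)
      + t • (A + s • (1 : Matrix (Fin n) (Fin n) ℝ)) := by
    ext i j
    rcases eq_or_ne i j with h | h <;>
      simp [Matrix.add_apply, Matrix.smul_apply, Matrix.one_apply, h] <;> ring
  rw [key, Matrix.exp_add_of_commute _ _ (by exact (Commute.one_left _).smul_left _)]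
  have h1 : exp ((-(t * s)) • (1 : Matrix (Fin n) (Fin n) ℝ))
      = Real.exp (-(t * s)) • (1 : Matrix (Fin n) (Fin n) ℝ) := by
    erw [← Algebra.algebraMap_eq_smul_one, ← algebraMap_exp_comm, ← Real.exp_eq_exp_ℝ,
      Algebra.algebraMap_eq_smul_one]
  rw [h1, Matrix.smul_mul, one_mul, Matrix.smul_apply]
  exact mul_nonneg (Real.exp_pos _).le (exp_entry_nonneg hN i j)

/-- `M ↦ (w ↦ M *ᵥ w)` as a continuous linear map. -/
def mulVecL : Matrix (Fin n) (Fin n) ℝ →ₗ[ℝ] (Fin n → ℝ) →L[ℝ] (Fin n → ℝ) where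
  toFun M := LinearMap.toContinuousLinearMap M.mulVecLin
  map_add' M N := by
    ext w i
    simp [Matrix.add_mulVec]
  map_smul' c M := by
    ext w i
    simp [Matrix.smul_mulVec]

def mulVecCLM : Matrix (Fin n) (Fin n) ℝ →L[ℝ] (Fin n → ℝ) →L[ℝ] (Fin n → ℝ) :=
  LinearMap.toContinuousLinearMap mulVecL

@[simp] lemma mulVecCLM_apply (M : Matrix (Fin n) (Fin n) ℝ) (w : Fin n → ℝ) :
    mulVecCLM M w = M *ᵥ w := rfl

lemma hasDerivAt_exp_smul (A : Matrix (Fin n) (Fin n) ℝ) (t : ℝ) :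
    HasDerivAt (fun τ : ℝ => exp (τ • A)) (A * exp (t • A)) t :=
  hasDerivAt_exp_smul_const' A t

lemma rep (A : Matrix (Fin n) (Fin n) ℝ) (x : ℝ → Fin n → ℝ)
    (hx : ∀ t : ℝ, 0 ≤ t → HasDerivAt x (A *ᵥ x t) t)
    {s t : ℝ} (hs : 0 ≤ s) (hst : s ≤ t) :
    x t = exp ((t - s) • A) *ᵥ x s := by
  set F : ℝ → (Fin n → ℝ) := fun τ => mulVecCLM (exp ((s - τ) • A)) (x τ) with hF
  have hFder : ∀ τ : ℝ, 0 ≤ τ → HasDerivAt F 0 τ := by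
    intro τ hτ0
    have hE : HasDerivAt (fun τ : ℝ => exp ((s - τ) • A))
        (-(A * exp ((s - τ) • A))) τ := by
      have h1 := hasDerivAt_exp_smul A (s - τ)
      have h2 : HasDerivAt (fun τ : ℝ => s - τ) (-1 : ℝ) τ :=
        (hasDerivAt_id τ).const_sub s
      have := h1.scomp τ h2
      simp only [Function.comp_def] at this
      rw [neg_one_smul] at this
      exact this
    have hx' := hx τ hτ0
    have hC : HasDerivAt (fun τ : ℝ => mulVecCLM (exp ((s - τ) • A)))
        (mulVecCLM (-(A * exp ((s - τ) • A)))) τ :=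
      mulVecCLM.hasFDerivAt.comp_hasDerivAt τ hE
    have hFd := hC.clm_apply hx'
    have hcomm : exp ((s - τ) • A) * A = A * exp ((s - τ) • A) :=
      (((Commute.refl A).smul_right (s - τ)).exp_right).eq.symm
    have hzero : mulVecCLM (-(A * exp ((s - τ) • A))) (x τ)
        + mulVecCLM (exp ((s - τ) • A)) (A *ᵥ x τ) = 0 := by
      simp only [mulVecCLM_apply, Matrix.neg_mulVec, Matrix.mulVec_mulVec, hcomm]
      abel
    rw [hzero] at hFd
    exact hFd
  have hcont : ContinuousOn F (Set.Icc s t) := fun τ hτ =>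
    ((hFder τ (le_trans hs hτ.1)).continuousAt).continuousWithinAt
  have hFt : F t = F s :=
    constant_of_has_deriv_right_zero hcont
      (fun τ hτ => ((hFder τ (le_trans hs hτ.1)).hasDerivWithinAt)) t
      (Set.right_mem_Icc.2 hst)
  have hFs : F s = x s := by
    simp [hF, sub_self, zero_smul, NormedSpace.exp_zero, Matrix.one_mulVec]
  have hFt' : exp ((s - t) • A) *ᵥ x t = x s := by
    have := hFt.trans hFs
    simpa [hF] using this
  have hinv : exp ((t - s) • A) * exp ((s - t) • A) = 1 := by
    rw [← Matrix.exp_add_of_commute _ _ (((Commute.refl A).smul_right _).smul_left _)]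
    rw [show (t - s) • A + (s - t) • A = 0 by rw [← add_smul]; ring_nf; exact zero_smul ℝ A]
    exact NormedSpace.exp_zero
  calc x t = (1 : Matrix (Fin n) (Fin n) ℝ) *ᵥ x t := (Matrix.one_mulVec _).symm
    _ = (exp ((t - s) • A) * exp ((s - t) • A)) *ᵥ x t := by rw [hinv]
    _ = exp ((t - s) • A) *ᵥ (exp ((s - t) • A) *ᵥ x t) :=
        (Matrix.mulVec_mulVec _ _ _).symm
    _ = exp ((t - s) • A) *ᵥ x s := by rw [hFt']

lemma phi_hasDeriv (A : Matrix (Fin n) (Fin n) ℝ) (v w : Fin n → ℝ) (τ : ℝ) :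
    HasDerivAt (fun τ : ℝ => ∑ i, v i * (exp (τ • A) *ᵥ w) i)
      (∑ i, v i * ((A * exp (τ • A)) *ᵥ w) i) τ := by
  have hE := hasDerivAt_exp_smul A τ
  have h1 : ∀ i : Fin n, HasDerivAt (fun τ : ℝ => (exp (τ • A) *ᵥ w) i)
      (((A * exp (τ • A)) *ᵥ w) i) τ := by
    intro i
    have := ((ContinuousLinearMap.proj i : (Fin n → ℝ) →L[ℝ] ℝ).comp
      (mulVecCLM.flip w)).hasFDerivAt.comp_hasDerivAt τ hE
    simp only [Function.comp_def] at this
    exact this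
  exact HasDerivAt.fun_sum (fun i _ => (h1 i).const_mul (v i))

lemma phi_decay (A : Matrix (Fin n) (Fin n) ℝ) (hA : Metzler A)
    (v : Fin n → ℝ) (hv : ∀ i, 0 < v i) {c : ℝ} (hc : 0 < c)
    (hcA : ∀ j, ∑ i, v i * A i j ≤ -(c * v j))
    (w : Fin n → ℝ) (hw : ∀ i, 0 ≤ w i) {τ : ℝ} (hτ : 0 ≤ τ) :
    ∑ i, v i * (exp (τ • A) *ᵥ w) i ≤ Real.exp (-(c * τ)) * ∑ i, v i * w i := by
  set pphi : ℝ → ℝ := fun τ => ∑ i, v i * (exp (τ • A) *ᵥ w) i with hpph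
  set ppsi : ℝ → ℝ := fun τ => Real.exp (c * τ) * pphi τ with hpps
  have hpphd : ∀ σ : ℝ, HasDerivAt pphi (∑ i, v i * ((A * exp (σ • A)) *ᵥ w) i) σ :=
    fun σ => phi_hasDeriv A v w σ
  have hppsd : ∀ σ : ℝ, HasDerivAt ppsi
      (c * Real.exp (c * σ) * pphi σ + Real.exp (c * σ) * (∑ i, v i * ((A * exp (σ • A)) *ᵥ w) i)) σ := by
    intro σ
    have h1 : HasDerivAt (fun σ : ℝ => Real.exp (c * σ)) (c * Real.exp (c * σ)) σ := by
      have := (Real.hasDerivAt_exp (c * σ)).comp σ ((hasDerivAt_id σ).const_mul c)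
      simpa [mul_comm, Function.comp_def] using this
    simpa [mul_comm, mul_assoc, mul_left_comm] using h1.fun_mul (hpphd σ)
  have hpphnn : ∀ σ : ℝ, 0 ≤ σ → 0 ≤ pphi σ := by
    intro σ hσ
    refine Finset.sum_nonneg fun i _ => mul_nonneg (hv i).le ?_
    simp only [Matrix.mulVec, dotProduct]
    exact Finset.sum_nonneg fun j _ => mul_nonneg (exp_smul_entry_nonneg A hA hσ i j) (hw j)
  have hkey : ∀ σ : ℝ, 0 ≤ σ →
      ∑ i, v i * ((A * exp (σ • A)) *ᵥ w) i ≤ -(c * pphi σ) := by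
    intro σ hσ
    have hy : ∀ k, 0 ≤ (exp (σ • A) *ᵥ w) k := by
      intro k
      simp only [Matrix.mulVec, dotProduct]
      exact Finset.sum_nonneg fun j _ => mul_nonneg (exp_smul_entry_nonneg A hA hσ k j) (hw j)
    have h1 : (A * exp (σ • A)) *ᵥ w = A *ᵥ (exp (σ • A) *ᵥ w) :=
      (Matrix.mulVec_mulVec _ _ _).symm
    rw [h1]
    calc ∑ i, v i * (A *ᵥ (exp (σ • A) *ᵥ w)) i
        = ∑ i, ∑ k, v i * A i k * (exp (σ • A) *ᵥ w) k := by
          simp [Matrix.mulVec, dotProduct, Finset.mul_sum, mul_assoc]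
      _ = ∑ k, (∑ i, v i * A i k) * (exp (σ • A) *ᵥ w) k := by
          rw [Finset.sum_comm]
          exact Finset.sum_congr rfl fun k _ => (Finset.sum_mul _ _ _).symm
      _ ≤ ∑ k, (-(c * v k)) * (exp (σ • A) *ᵥ w) k :=
          Finset.sum_le_sum fun k _ => mul_le_mul_of_nonneg_right (hcA k) (hy k)
      _ = -(c * pphi σ) := by
          simp only [hpph, Finset.mul_sum, ← Finset.sum_neg_distrib]
          exact Finset.sum_congr rfl fun k _ => by ring
  have hppsmono : AntitoneOn ppsi (Set.Ici (0:ℝ)) := by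
    apply antitoneOn_of_deriv_nonpos (convex_Ici 0)
    · exact fun σ _ => ((hppsd σ).continuousAt).continuousWithinAt
    · exact fun σ _ => ((hppsd σ).differentiableAt).differentiableWithinAt
    · intro σ hσ
      rw [interior_Ici] at hσ
      rw [(hppsd σ).deriv]
      have h2 := hkey σ (le_of_lt hσ)
      have h3 := Real.exp_pos (c * σ)
      nlinarith [mul_le_mul_of_nonneg_left h2 h3.le]
  have hppsτ : ppsi τ ≤ ppsi 0 := hppsmono (Set.self_mem_Ici) hτ hτ
  have hpps0 : ppsi 0 = ∑ i, v i * w i := by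
    simp [hpps, hpph, zero_smul, NormedSpace.exp_zero, Matrix.one_mulVec]
  rw [hpps0] at hppsτ
  have h4 := Real.exp_pos (c * τ)
  rw [Real.exp_neg]
  rw [hpps] at hppsτ
  calc pphi τ = (Real.exp (c * τ))⁻¹ * (Real.exp (c * τ) * pphi τ) := by
        field_simp
    _ ≤ (Real.exp (c * τ))⁻¹ * ∑ i, v i * w i := by
        apply mul_le_mul_of_nonneg_left hppsτ (by positivity)

lemma sol_decay (A : Matrix (Fin n) (Fin n) ℝ) (hA : Metzler A)
    (v : Fin n → ℝ) (hv : ∀ i, 0 < v i) {c : ℝ} (hc : 0 < c)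
    (hcA : ∀ j, ∑ i, v i * A i j ≤ -(c * v j))
    (x : ℝ → Fin n → ℝ) (hx : ∀ t : ℝ, 0 ≤ t → HasDerivAt x (A *ᵥ x t) t)
    (s t : ℝ) (hs : 0 ≤ s) (hst : s ≤ t) :
    ∑ i, v i * |x t i| ≤ Real.exp (-(c * (t - s))) * ∑ i, v i * |x s i| := by
  have hts : (0:ℝ) ≤ t - s := sub_nonneg.2 hst
  have hrep := rep A x hx hs hst
  set w : Fin n → ℝ := fun j => |x s j| with hw
  have habs : ∀ i, |x t i| ≤ (exp ((t - s) • A) *ᵥ w) i := by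
    intro i
    rw [hrep]
    simp only [Matrix.mulVec, dotProduct]
    refine (Finset.abs_sum_le_sum_abs _ _).trans ?_
    refine le_of_eq (Finset.sum_congr rfl fun j _ => ?_)
    rw [abs_mul, abs_of_nonneg (exp_smul_entry_nonneg A hA hts i j)]
  have h1 : ∑ i, v i * |x t i| ≤ ∑ i, v i * (exp ((t - s) • A) *ᵥ w) i :=
    Finset.sum_le_sum fun i _ => mul_le_mul_of_nonneg_left (habs i) (hv i).le
  exact h1.trans (phi_decay A hA v hv hc hcA w (fun i => abs_nonneg _) hts)

end LinSumSep

open Matrix in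
/-- A Metzler matrix admitting a positive vector `v` with `vᵀA < 0` is
Hurwitz; the origin of `ẋ = Ax` is globally asymptotically stable and both
`Σᵢ vᵢ|xᵢ|` and `Σᵢ vᵢ|(Ax)ᵢ|` decrease to `0` along solutions. -/
theorem linear_sum_separable {n : ℕ}
    (A : Matrix (Fin n) (Fin n) ℝ) (hA : Metzler A)
    (v : Fin n → ℝ) (hv : ∀ i, 0 < v i)
    (hvA : ∀ j, (∑ i, v i * A i j) < 0) :
    Hurwitz A ∧
    IsGAS (fun x => A.mulVec x) Set.univ 0 ∧
    ∀ x : ℝ → (Fin n → ℝ), IsSolution (fun y => A.mulVec y) Set.univ x →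
      (AntitoneOn (fun t => ∑ i, v i * |x t i|) (Set.Ici 0) ∧
        Tendsto (fun t => ∑ i, v i * |x t i|) atTop (nhds 0)) ∧
      (AntitoneOn (fun t => ∑ i, v i * |A.mulVec (x t) i|) (Set.Ici 0) ∧
        Tendsto (fun t => ∑ i, v i * |A.mulVec (x t) i|) atTop (nhds 0)) := by
  classical
  obtain ⟨c, hc, hcA⟩ : ∃ c : ℝ, 0 < c ∧ ∀ j, ∑ i, v i * A i j ≤ -(c * v j) := by
    rcases isEmpty_or_nonempty (Fin n) with h | h
    · exact ⟨1, one_pos, fun j => h.elim j⟩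
    · refine ⟨Finset.univ.inf' Finset.univ_nonempty (fun j => (-∑ i, v i * A i j) / v j), ?_, ?_⟩
      · rw [Finset.lt_inf'_iff]
        intro j _
        exact div_pos (neg_pos.2 (hvA j)) (hv j)
      · intro j
        have h1 : Finset.univ.inf' Finset.univ_nonempty (fun j => (-∑ i, v i * A i j) / v j)
            ≤ (-∑ i, v i * A i j) / v j :=
          Finset.inf'_le _ (Finset.mem_univ j)
        have h2 := hv j
        rw [le_div_iff₀ h2] at h1
        nlinarith
  have hVnonneg : ∀ u : Fin n → ℝ, 0 ≤ ∑ i, v i * |u i| := fun u =>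
    Finset.sum_nonneg fun i _ => mul_nonneg (hv i).le (abs_nonneg _)
  -- the main Lyapunov behaviour along any solution
  have main : ∀ x : ℝ → Fin n → ℝ, (∀ t : ℝ, 0 ≤ t → HasDerivAt x (A *ᵥ x t) t) →
      AntitoneOn (fun t => ∑ i, v i * |x t i|) (Set.Ici 0) ∧
      Tendsto (fun t => ∑ i, v i * |x t i|) atTop (nhds 0) := by
    intro x hx
    have hdec := fun s t hs hst => LinSumSep.sol_decay A hA v hv hc hcA x hx s t hs hst
    constructor
    · intro s hs t ht hst
      have h := hdec s t hs hst
      have he : Real.exp (-(c * (t - s))) ≤ 1 := by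
        rw [← Real.exp_zero]
        exact Real.exp_le_exp.2 (by nlinarith)
      have h0 := hVnonneg (x s)
      calc ∑ i, v i * |x t i| ≤ Real.exp (-(c * (t - s))) * ∑ i, v i * |x s i| := h
        _ ≤ 1 * ∑ i, v i * |x s i| := mul_le_mul_of_nonneg_right he h0
        _ = ∑ i, v i * |x s i| := one_mul _
    · have hub : ∀ t : ℝ, 0 ≤ t →
          (∑ i, v i * |x t i|) ≤ Real.exp (-(c * t)) * ∑ i, v i * |x 0 i| := by
        intro t ht
        simpa using hdec 0 t le_rfl ht
      have h0 : Tendsto (fun t : ℝ => Real.exp (-(c * t)) * ∑ i, v i * |x 0 i|)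
          atTop (nhds 0) := by
        have h1 : Tendsto (fun t : ℝ => c * t) atTop atTop :=
          Tendsto.const_mul_atTop hc tendsto_id
        have := (Real.tendsto_exp_neg_atTop_nhds_zero.comp h1).mul_const (∑ i, v i * |x 0 i|)
        simpa [Function.comp] using this
      refine tendsto_of_tendsto_of_tendsto_of_le_of_le' tendsto_const_nhds h0 ?_ ?_
      · exact Eventually.of_forall fun t => hVnonneg _
      · filter_upwards [eventually_ge_atTop (0:ℝ)] with t ht using hub t ht
  -- Hurwitz
  have hur : Hurwitz A := by
    intro z hz
    obtain ⟨u, hu⟩ := hz.exists_hasEigenvector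
    have heq : (A.map (algebraMap ℝ ℂ)) *ᵥ u = z • u := by
      have h := hu.apply_eq_smul
      rwa [Matrix.toLin'_apply] at h
    set r : Fin n → ℝ := fun i => ‖u i‖ with hr
    have hr0 : ∀ i, 0 ≤ r i := fun i => norm_nonneg _
    have hcomp : ∀ j, z.re * r j ≤ ∑ k, A j k * r k := by
      intro j
      have hj : z * u j = ∑ k, (algebraMap ℝ ℂ) (A j k) * u k := by
        have h := congrFun heq j
        simpa [Matrix.mulVec, dotProduct, Matrix.map_apply, Pi.smul_apply,
          smul_eq_mul] using h.symm
      by_cases hjz : u j = 0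
      · have hL : z.re * r j = 0 := by simp [hr, hjz]
        rw [hL]
        refine Finset.sum_nonneg fun k _ => ?_
        rcases eq_or_ne k j with h | h
        · subst h; simp [hr, hjz]
        · exact mul_nonneg (hA j k (Ne.symm h)) (hr0 k)
      · have hrj : 0 < r j := by
          simpa [hr] using norm_pos_iff.2 hjz
        have h2 : z.re * (r j * r j) ≤ (∑ k, A j k * r k) * r j := by
          have hmul := congrArg (fun w : ℂ => (w * (starRingEnd ℂ) (u j)).re) hj
          have hL : (z * u j * (starRingEnd ℂ) (u j)).re = z.re * (r j * r j) := by
            rw [mul_assoc, Complex.mul_conj]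
            simp only [Complex.mul_re, Complex.ofReal_re, Complex.ofReal_im, mul_zero, sub_zero]
            rw [Complex.normSq_eq_norm_sq]
            simp only [hr]
            ring
          have hR : ((∑ k, (algebraMap ℝ ℂ) (A j k) * u k) * (starRingEnd ℂ) (u j)).re
              = ∑ k, A j k * (u k * (starRingEnd ℂ) (u j)).re := by
            rw [Finset.sum_mul, Complex.re_sum]
            refine Finset.sum_congr rfl fun k _ => ?_
            rw [mul_assoc]
            simp [Complex.mul_re, Complex.ofReal_re, Complex.ofReal_im]
          rw [hL, hR] at hmul
          rw [hmul]
          rw [Finset.sum_mul]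
          refine Finset.sum_le_sum fun k _ => ?_
          rcases eq_or_ne k j with h | h
          · subst h
            rw [Complex.mul_conj]
            simp only [Complex.ofReal_re]
            rw [Complex.normSq_eq_norm_sq]
            have hrk : ‖u k‖^2 = r k * r k := by simp only [hr]; ring
            rw [hrk]
            exact le_of_eq (by ring)
          · have hAk := hA j k (Ne.symm h)
            have hre : (u k * (starRingEnd ℂ) (u j)).re ≤ r k * r j := by
              refine (Complex.re_le_norm _).trans ?_
              rw [norm_mul, Complex.norm_conj]
            have := mul_le_mul_of_nonneg_left hre hAk
            nlinarith [this]
        nlinarith [h2, hrj]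
    have hsum : z.re * (∑ j, v j * r j) ≤ ∑ k, (∑ j, v j * A j k) * r k := by
      calc z.re * ∑ j, v j * r j = ∑ j, v j * (z.re * r j) := by
            rw [Finset.mul_sum]
            exact Finset.sum_congr rfl fun j _ => by ring
        _ ≤ ∑ j, v j * ∑ k, A j k * r k :=
            Finset.sum_le_sum fun j _ => mul_le_mul_of_nonneg_left (hcomp j) (hv j).le
        _ = ∑ k, (∑ j, v j * A j k) * r k := by
            simp_rw [Finset.mul_sum]
            rw [Finset.sum_comm]
            exact Finset.sum_congr rfl fun k _ => by
              rw [Finset.sum_mul]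
              exact Finset.sum_congr rfl fun j _ => by ring
    obtain ⟨k0, hk0⟩ : ∃ k, 0 < r k := by
      by_contra h
      push_neg at h
      apply hu.2
      funext i
      have h1 : r i = 0 := le_antisymm (h i) (hr0 i)
      have h2 : ‖u i‖ = 0 := h1
      simpa using norm_eq_zero.mp h2
    have hRHS : ∑ k, (∑ j, v j * A j k) * r k < 0 := by
      have hlt : (∑ j, v j * A j k0) * r k0 < 0 := mul_neg_of_neg_of_pos (hvA k0) hk0
      calc ∑ k, (∑ j, v j * A j k) * r k < ∑ _k : Fin n, (0:ℝ) :=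
            Finset.sum_lt_sum
              (fun k _ => mul_nonpos_iff.2 (Or.inr ⟨(hvA k).le, hr0 k⟩))
              ⟨k0, Finset.mem_univ k0, hlt⟩
        _ = 0 := by simp
    have hV : 0 < ∑ j, v j * r j :=
      Finset.sum_pos' (fun j _ => mul_nonneg (hv j).le (hr0 j))
        ⟨k0, Finset.mem_univ k0, mul_pos (hv k0) hk0⟩
    nlinarith [hsum, hRHS, hV]
  -- norm comparison constants
  obtain ⟨m, hm, hmle⟩ : ∃ m : ℝ, 0 < m ∧ ∀ i, m ≤ v i := by
    rcases isEmpty_or_nonempty (Fin n) with h | h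
    · exact ⟨1, one_pos, fun i => h.elim i⟩
    · exact ⟨Finset.univ.inf' Finset.univ_nonempty v,
        by rw [Finset.lt_inf'_iff]; exact fun i _ => hv i,
        fun i => Finset.inf'_le _ (Finset.mem_univ i)⟩
  have hnorm_le : ∀ u : Fin n → ℝ, m * ‖u‖ ≤ ∑ i, v i * |u i| := by
    intro u
    have h1 : ‖u‖ ≤ (∑ i, v i * |u i|) / m := by
      rw [pi_norm_le_iff_of_nonneg (div_nonneg (hVnonneg u) hm.le)]
      intro i
      rw [Real.norm_eq_abs, le_div_iff₀ hm]
      calc |u i| * m ≤ |u i| * v i :=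
            mul_le_mul_of_nonneg_left (hmle i) (abs_nonneg _)
        _ = v i * |u i| := mul_comm _ _
        _ ≤ ∑ j, v j * |u j| :=
            Finset.single_le_sum (f := fun j => v j * |u j|)
              (fun j _ => mul_nonneg (hv j).le (abs_nonneg _)) (Finset.mem_univ i)
    calc m * ‖u‖ ≤ m * ((∑ i, v i * |u i|) / m) := mul_le_mul_of_nonneg_left h1 hm.le
      _ = ∑ i, v i * |u i| := by field_simp
  have hle_norm : ∀ u : Fin n → ℝ, (∑ i, v i * |u i|) ≤ (∑ i, v i) * ‖u‖ := by
    intro u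
    rw [Finset.sum_mul]
    refine Finset.sum_le_sum fun i _ => ?_
    refine mul_le_mul_of_nonneg_left ?_ (hv i).le
    simpa [Real.norm_eq_abs] using norm_le_pi_norm u i
  have hS : (0:ℝ) ≤ ∑ i, v i := Finset.sum_nonneg fun i _ => (hv i).le
  refine ⟨hur, ⟨?_, ?_⟩, ?_⟩
  · -- stability
    intro ε hε
    refine ⟨m * ε / ((∑ i, v i) + 1), by positivity, ?_⟩
    intro x hx hx0 t ht
    have hδ : (m * ε / ((∑ i, v i) + 1)) * ((∑ i, v i) + 1) = m * ε := by
      field_simp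
    have hδpos : 0 < m * ε / ((∑ i, v i) + 1) := by positivity
    rw [sub_zero] at hx0 ⊢
    have h1 : m * ‖x t‖ ≤ ∑ i, v i * |x t i| := hnorm_le _
    have h2 : (∑ i, v i * |x t i|) ≤ ∑ i, v i * |x 0 i| :=
      (main x hx.2).1 Set.self_mem_Ici (Set.mem_Ici.2 ht) ht
    have h3 : (∑ i, v i * |x 0 i|) ≤ (∑ i, v i) * ‖x 0‖ := hle_norm _
    have h4 : (∑ i, v i) * ‖x 0‖ ≤ (∑ i, v i) * (m * ε / ((∑ i, v i) + 1)) :=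
      mul_le_mul_of_nonneg_left hx0.le hS
    have h5 : m * ‖x t‖ < m * ε := by nlinarith
    exact lt_of_mul_lt_mul_left h5 hm.le
  · -- attractivity
    intro x hx
    have hmain := (main x hx.2).2
    have hnorm : Tendsto (fun t => ‖x t‖) atTop (nhds 0) := by
      have hub : ∀ t : ℝ, ‖x t‖ ≤ (1 / m) * ∑ i, v i * |x t i| := by
        intro t
        have := hnorm_le (x t)
        rw [div_mul_eq_mul_div, le_div_iff₀ hm]
        linarith
      have h0 : Tendsto (fun t => (1 / m) * ∑ i, v i * |x t i|) atTop (nhds 0) := by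
        have := hmain.const_mul (1 / m)
        simpa using this
      refine tendsto_of_tendsto_of_tendsto_of_le_of_le' tendsto_const_nhds h0 ?_ ?_
      · exact Eventually.of_forall fun t => norm_nonneg _
      · exact Eventually.of_forall hub
    exact tendsto_zero_iff_norm_tendsto_zero.2 hnorm
  · -- Lyapunov functions decrease to zero
    intro x hx
    refine ⟨main x hx.2, ?_⟩
    have hy : ∀ t : ℝ, 0 ≤ t → HasDerivAt (fun t => A *ᵥ x t) (A *ᵥ (A *ᵥ x t)) t := by
      intro t ht
      have hL := (LinearMap.toContinuousLinearMap
        (Matrix.mulVecLin A)).hasFDerivAt.comp_hasDerivAt t (hx.2 t ht)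
      simpa [Function.comp_def, Matrix.mulVecLin_apply] using hL
    exact main (fun t => A *ᵥ x t) hy


end
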